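/- Let A_1, …, A_k be pairwise commuting N×N matrices with nonnegative integer entries and no zero rows forming an irreducible family, let ρ_i be the spectral radius of A_i, let x ∈ (0,∞)^N be the unimodular Perron–Frobenius eigenvector, and suppose ρ_i > 1 for all 1 ≤ i ≤ k. Fix δ ∈ (0,1). Then the infinite path space X_B of the associated stationary k-Bratteli diagram, equipped with the metric d_δ = d_{w_δ}, is an ultrametric Cantor set: X_B is nonempty, compact, perfect, and totally disconnected, d_δ is a metric satisfying d_δ(x,y) ≤ max{d_δ(x,z), d_δ(z,y)} for all x, y, z, and d_δ induces the cylinder-set topology on X_B. -/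

import Mathlib

open scoped Classical ENNReal Topology
open TopologicalSpace MeasureTheory Filter Set
open Fin.NatCast

namespace KBratteli

variable (k N : ℕ) [NeZero k] (A : Fin k → Matrix (Fin N) (Fin N) ℕ)

/-- An edge at level `n` of the stationary `k`-Bratteli diagram of the matrices
`A 0, …, A (k-1)`: an element of `Edge k N A n` is an edge whose source lies in the
level-`(n+1)` vertex set and whose range lies in the level-`n` vertex set (both copies of
`Fin N`); there are exactly `A (n % k) p q` edges with range `p` and source `q`. -/
structure Edge (n : ℕ) : Type where
  rg : Fin N
  src : Fin N
  idx : Fin (A (n : Fin k) rg src)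

/-- The infinite path space `X_B` of the stationary `k`-Bratteli diagram of `A`. -/
def PathSpace : Type :=
  { x : (n : ℕ) → Edge k N A n // ∀ n, (x n).src = (x (n + 1)).rg }

/-- A finite path of length `ℓ` beginning at level `0`: a composable string of edges,
together with the vertices it visits.  Length-`0` paths are vertices of `V₀`. -/
structure FinPath (ℓ : ℕ) : Type where
  vtx : Fin (ℓ + 1) → Fin N
  edge : (i : Fin ℓ) → Edge k N A i
  rg_eq : ∀ i : Fin ℓ, (edge i).rg = vtx i.castSucc
  src_eq : ∀ i : Fin ℓ, (edge i).src = vtx i.succ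

/-- `FB`: the set of all finite paths (of all lengths) beginning at level `0`. -/
abbrev FB : Type := Σ ℓ : ℕ, FinPath k N A ℓ

variable {k N A}

/-- The source (final) vertex of a finite path. -/
def FinPath.src {ℓ : ℕ} (lam : FinPath k N A ℓ) : Fin N := lam.vtx (Fin.last ℓ)

/-- The range (initial, level-0) vertex of a finite path. -/
def FinPath.rg {ℓ : ℕ} (lam : FinPath k N A ℓ) : Fin N := lam.vtx 0

/-- The length-0 finite path at the level-0 vertex `v`. -/
def vertexPath (v : Fin N) : FinPath k N A 0 where
  vtx := fun _ => v
  edge := fun i => i.elim0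
  rg_eq := fun i => i.elim0
  src_eq := fun i => i.elim0

/-- The cylinder set `[λ]` of a finite path `λ`: all infinite paths with initial
segment `λ`. -/
def Cyl {ℓ : ℕ} (lam : FinPath k N A ℓ) : Set (PathSpace k N A) :=
  { x | (x.1 0).rg = lam.rg ∧ ∀ i : Fin ℓ, x.1 i = lam.edge i }

variable (k N A) in
/-- The collection of all cylinder sets. -/
def cylinderSets : Set (Set (PathSpace k N A)) :=
  { S | ∃ (ℓ : ℕ) (lam : FinPath k N A ℓ), S = Cyl lam }

/-- The cylinder-set topology on the infinite path space. -/
instance : TopologicalSpace (PathSpace k N A) :=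
  generateFrom (cylinderSets k N A)

/-- The Borel σ-algebra of the cylinder-set topology. -/
instance : MeasurableSpace (PathSpace k N A) := borel _

instance : BorelSpace (PathSpace k N A) := ⟨rfl⟩

lemma isOpen_cyl {ℓ : ℕ} (lam : FinPath k N A ℓ) : IsOpen (Cyl lam) :=
  isOpen_generateFrom_of_mem ⟨ℓ, lam, rfl⟩

lemma measurableSet_cyl {ℓ : ℕ} (lam : FinPath k N A ℓ) : MeasurableSet (Cyl lam) :=
  (isOpen_cyl lam).measurableSet

/-- Edges form a finite type. -/
def edgeEquiv (n : ℕ) : Edge k N A n ≃ Σ p : Fin N, Σ q : Fin N, Fin (A (n : Fin k) p q) where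
  toFun e := ⟨e.rg, e.src, e.idx⟩
  invFun t := ⟨t.1, t.2.1, t.2.2⟩
  left_inv e := rfl
  right_inv t := rfl

instance (n : ℕ) : Finite (Edge k N A n) := by
  haveI : ∀ p : Fin N, Finite (Σ q : Fin N, Fin (A (n : Fin k) p q)) := fun p => inferInstance
  exact Finite.of_equiv _ (edgeEquiv n).symm

instance (ℓ : ℕ) : Finite (FinPath k N A ℓ) := by
  have hinj : Function.Injective
      (fun lam : FinPath k N A ℓ => (lam.vtx, lam.edge)) := by
    rintro ⟨v, e, h1, h2⟩ ⟨v', e', h1', h2'⟩ h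
    simp only [Prod.mk.injEq] at h
    obtain ⟨hv, he⟩ := h
    subst hv; subst he; rfl
  exact Finite.of_injective _ hinj

instance : Countable (FB k N A) := by infer_instance

/-- The initial segment of length `m` of an infinite path. -/
def prefixPath (x : PathSpace k N A) (m : ℕ) : FinPath k N A m where
  vtx := fun i => (x.1 i).rg
  edge := fun i => x.1 i
  rg_eq := fun _ => rfl
  src_eq := fun i => x.2 i

lemma mem_cyl_prefixPath (x : PathSpace k N A) (m : ℕ) : x ∈ Cyl (prefixPath x m) :=
  ⟨rfl, fun _ => rfl⟩

lemma measurableSet_coord (j : ℕ) (P : Edge k N A j → Prop) :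
    MeasurableSet { x : PathSpace k N A | P (x.1 j) } := by
  have h : { x : PathSpace k N A | P (x.1 j) }
      = ⋃ (lam : FinPath k N A (j + 1)) (_ : P (lam.edge (Fin.last j))), Cyl lam := by
    ext x
    simp only [Set.mem_setOf_eq, Set.mem_iUnion]
    constructor
    · intro hx
      exact ⟨prefixPath x (j + 1), hx, mem_cyl_prefixPath x (j + 1)⟩
    · rintro ⟨lam, hP, -, hedge⟩
      have hx : x.1 j = lam.edge (Fin.last j) := hedge (Fin.last j)
      rw [hx]; exact hP
  rw [h]
  exact MeasurableSet.iUnion fun lam => MeasurableSet.iUnion fun _ => measurableSet_cyl lam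

/-- The first level at which two infinite paths differ. -/
noncomputable def firstDiff (x y : PathSpace k N A) : ℕ := sInf { n | x.1 n ≠ y.1 n }

/-- The function `d_w` associated to a weight-type function `w` on finite paths:
`d_w(x,x) = 0`; `d_w(x,y) = 1` if `x` and `y` have no common initial sub-path (i.e. they
do not even start at the same level-0 vertex); and otherwise `d_w(x,y) = w(x ∧ y)`, the
value of `w` on the longest common initial sub-path of `x` and `y`. -/
noncomputable def distW (w : FB k N A → ℝ) (x y : PathSpace k N A) : ℝ :=
  if x = y then 0
  else if (x.1 0).rg = (y.1 0).rg then w ⟨firstDiff x y, prefixPath x (firstDiff x y)⟩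
  else 1

/-- `η` is an (initial) sub-path of `λ`. -/
def IsSubPath {m ℓ : ℕ} (η : FinPath k N A m) (lam : FinPath k N A ℓ) : Prop :=
  ∃ h : m ≤ ℓ, η.rg = lam.rg ∧ ∀ i : Fin m, η.edge i = lam.edge (Fin.castLE h i)

/-- `lam ∈ F_γ B` : the finite path `lam` extends `γ`. -/
def Extends {m : ℕ} (γ : FinPath k N A m) (lam : FB k N A) : Prop :=
  IsSubPath γ lam.2

/-- The spectral radius of a matrix of nonnegative integers, as a real number. -/
noncomputable def specRad {N : ℕ} (M : Matrix (Fin N) (Fin N) ℕ) : ℝ :=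
  (spectralRadius ℂ (M.map (Nat.cast : ℕ → ℂ))).toReal

/-- The weight `w_δ` on the stationary `k`-Bratteli diagram of `A`, relative to data
`ρ : Fin k → ℝ` (the spectral radii) and `xv : Fin N → ℝ` (the Perron–Frobenius
eigenvector): on a path `η` of length `q·k + t` (`0 ≤ t ≤ k-1`) it is
`(ρ₁^{q+1} ⋯ ρ_t^{q+1} · ρ_{t+1}^q ⋯ ρ_k^q)^{-1/δ} · xv (s η)`. -/
noncomputable def wt (δ : ℝ) (ρ : Fin k → ℝ) (xv : Fin N → ℝ) (lam : FB k N A) : ℝ :=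
  (∏ i : Fin k, ρ i ^ (if (i : ℕ) < lam.1 % k then lam.1 / k + 1 else lam.1 / k))
      ^ (-(1 / δ)) * xv lam.2.src

/-- The value `M([λ]) = (ρ₁⋯ρ_t)^{-(q+1)} (ρ_{t+1}⋯ρ_k)^{-q} · x_{s(λ)}` of the
measure `M` on the cylinder set of a path of length `q·k + t`. -/
noncomputable def Mval (ρ : Fin k → ℝ) (xv : Fin N → ℝ) (lam : FB k N A) : ℝ :=
  (∏ i : Fin k, ρ i ^ (if (i : ℕ) < lam.1 % k then lam.1 / k + 1 else lam.1 / k))⁻¹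
    * xv lam.2.src

/-- A family of matrices is irreducible if for every pair of indices some finite product
of matrices from the family has positive corresponding entry. -/
def IrreducibleFamily {k N : ℕ} (A : Fin k → Matrix (Fin N) (Fin N) ℕ) : Prop :=
  ∀ a b : Fin N, ∃ l : List (Fin k), 0 < (l.map A).prod a b

/-- A single square matrix with nonnegative integer entries is irreducible if for every
pair of indices some positive power has positive corresponding entry. -/
def MatIrreducible {N : ℕ} (B : Matrix (Fin N) (Fin N) ℕ) : Prop :=
  ∀ a b : Fin N, ∃ m : ℕ, 0 < m ∧ 0 < (B ^ m) a b

/-- The diameter (in `ℝ≥0∞`) of a set of infinite paths relative to `d_w`. -/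
noncomputable def diamW (w : FB k N A → ℝ) (U : Set (PathSpace k N A)) : ℝ≥0∞ :=
  ⨆ (x) (_ : x ∈ U) (y) (_ : y ∈ U), ENNReal.ofReal (distW w x y)

/-- The `t`-dimensional Hausdorff (outer) measure of a set `Z` relative to the metric
`d_w`: `H^t(Z) = lim_{ε → 0} inf { Σᵢ (diam Uᵢ)^t : Z ⊆ ⋃ᵢ Uᵢ, diam Uᵢ < ε }`. -/
noncomputable def hausW (w : FB k N A → ℝ) (t : ℝ) (Z : Set (PathSpace k N A)) : ℝ≥0∞ :=
  ⨆ (ε : ℝ≥0∞) (_ : 0 < ε),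
    ⨅ (U : ℕ → Set (PathSpace k N A)) (_ : Z ⊆ ⋃ n, U n)
      (_ : ∀ n, diamW w (U n) < ε), ∑' n, diamW w (U n) ^ t

lemma natCast_mul_add (n i : ℕ) : ((n * k + i : ℕ) : Fin k) = (i : Fin k) := by
  push_cast
  simp [Fin.natCast_self]

/-- Transport of edges between levels governed by the same matrix (the diagram is
stationary with period `k`). -/
def Edge.cast {i j : ℕ} (h : (i : Fin k) = (j : Fin k)) (e : Edge k N A i) :
    Edge k N A j where
  rg := e.rg
  src := e.src
  idx := Fin.cast (by rw [h]) e.idx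

/-- The cylinder set `[γ e]` of a finite path `γ` (of length `m`) extended by one
further edge `e` at level `m`. -/
def cylExt {m : ℕ} (γ : FinPath k N A m) (e : Edge k N A m) : Set (PathSpace k N A) :=
  Cyl γ ∩ { x | x.1 m = e }

lemma measurableSet_cylExt {m : ℕ} (γ : FinPath k N A m) (e : Edge k N A m) :
    MeasurableSet (cylExt γ e) :=
  (measurableSet_cyl γ).inter (measurableSet_coord m fun f => f = e)

/-- The cylinder set `[λ μ]` of the concatenation of `λ ∈ F^{nk}B` with `μ ∈ F^{k}B`
(the diagram being stationary of period `k`, `μ` concatenates onto `λ`). -/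
def cylCat {n : ℕ} (lam : FinPath k N A (n * k)) (η : FinPath k N A k) :
    Set (PathSpace k N A) :=
  Cyl lam ∩ { x | (x.1 (n * k)).rg = η.rg } ∩
    ⋂ i : Fin k,
      { x | x.1 (n * k + (i : ℕ)) = Edge.cast (natCast_mul_add n (i : ℕ)).symm (η.edge i) }

lemma measurableSet_cylCat {n : ℕ} (lam : FinPath k N A (n * k)) (η : FinPath k N A k) :
    MeasurableSet (cylCat lam η) :=
  ((measurableSet_cyl lam).inter
      (measurableSet_coord (n * k) (fun e => e.rg = η.rg))).inter
    (MeasurableSet.iInter fun i => measurableSet_coord (n * k + (i : ℕ))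
      (fun e => e = Edge.cast (natCast_mul_add n (i : ℕ)).symm (η.edge i)))



section AuxKB
variable {k N : ℕ} [NeZero k] {A : Fin k → Matrix (Fin N) (Fin N) ℕ}

/-! ### Combinatorial lemmas about cylinders, prefixes and `firstDiff`. -/

lemma mem_cyl_prefix_iff {p q : PathSpace k N A} {m : ℕ} :
    q ∈ Cyl (prefixPath p m) ↔ (q.1 0).rg = (p.1 0).rg ∧ ∀ i, i < m → q.1 i = p.1 i := by
  constructor
  · rintro ⟨h0, he⟩
    refine ⟨by simpa [prefixPath, FinPath.rg] using h0, fun i hi => ?_⟩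
    simpa [prefixPath] using he ⟨i, hi⟩
  · rintro ⟨h0, he⟩
    exact ⟨by simpa [prefixPath, FinPath.rg] using h0,
      fun i => by simpa [prefixPath] using he i i.2⟩

lemma cyl_prefix_subset_of_mem {ℓ : ℕ} {lam : FinPath k N A ℓ} {p : PathSpace k N A}
    (hp : p ∈ Cyl lam) {m : ℕ} (hm : ℓ ≤ m) : Cyl (prefixPath p m) ⊆ Cyl lam := by
  intro q hq
  rw [mem_cyl_prefix_iff] at hq
  refine ⟨hq.1.trans hp.1, fun i => ?_⟩
  rw [hq.2 i (lt_of_lt_of_le i.2 hm)]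
  exact hp.2 i

lemma cyl_prefix_mono (p : PathSpace k N A) {m n : ℕ} (h : m ≤ n) :
    Cyl (prefixPath p n) ⊆ Cyl (prefixPath p m) :=
  cyl_prefix_subset_of_mem (mem_cyl_prefixPath p m) h

lemma exists_prefix_subset {U : Set (PathSpace k N A)} (hU : IsOpen U) :
    ∀ p ∈ U, ∃ n, Cyl (prefixPath p n) ⊆ U := by
  have hU' : TopologicalSpace.GenerateOpen (cylinderSets k N A) U := hU
  clear hU
  induction hU' with
  | basic S hS =>
      rintro p hp
      obtain ⟨ℓ, lam, rfl⟩ := hS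
      exact ⟨ℓ, cyl_prefix_subset_of_mem hp le_rfl⟩
  | univ => exact fun p _ => ⟨0, fun q _ => trivial⟩
  | inter U V hUo hVo ihU ihV =>
      rintro p ⟨hpU, hpV⟩
      obtain ⟨n1, h1⟩ := ihU p hpU
      obtain ⟨n2, h2⟩ := ihV p hpV
      exact ⟨max n1 n2, Set.subset_inter
        ((cyl_prefix_mono p (le_max_left _ _)).trans h1)
        ((cyl_prefix_mono p (le_max_right _ _)).trans h2)⟩
  | sUnion S hS ih =>
      rintro p ⟨T, hT, hpT⟩
      obtain ⟨n, hn⟩ := ih T hT p hpT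
      exact ⟨n, hn.trans (Set.subset_sUnion_of_mem hT)⟩

lemma isOpen_of_forall_prefix {S : Set (PathSpace k N A)}
    (h : ∀ q ∈ S, ∃ n, Cyl (prefixPath q n) ⊆ S) : IsOpen S := by
  have hrep : S = ⋃ q : S, Cyl (prefixPath q.1 (h q.1 q.2).choose) := by
    ext z
    constructor
    · intro hz
      exact Set.mem_iUnion.2 ⟨⟨z, hz⟩, mem_cyl_prefixPath z _⟩
    · intro hz
      obtain ⟨q, hq⟩ := Set.mem_iUnion.1 hz
      exact (h q.1 q.2).choose_spec hq
  rw [hrep]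
  exact isOpen_iUnion fun q => isOpen_cyl _

lemma isClosed_cyl {ℓ : ℕ} (lam : FinPath k N A ℓ) : IsClosed (Cyl lam) := by
  rw [← isOpen_compl_iff]
  apply isOpen_of_forall_prefix
  intro q hq
  refine ⟨ℓ, fun z hz hzC => hq ?_⟩
  rw [mem_cyl_prefix_iff] at hz
  exact ⟨hz.1.symm.trans hzC.1, fun i => by rw [← hz.2 i i.2]; exact hzC.2 i⟩

/-! ### Constructing infinite paths. -/

noncomputable def extEdge (hrow : ∀ (i : Fin k) (a : Fin N), ∃ b, 0 < A i a b)
    (n : ℕ) (v : Fin N) : Edge k N A n :=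
  ⟨v, (hrow _ v).choose, ⟨0, (hrow _ v).choose_spec⟩⟩

lemma buildPath (hrow : ∀ (i : Fin k) (a : Fin N), ∃ b, 0 < A i a b)
    (m : ℕ) (g : ∀ i, Edge k N A i)
    (hg : ∀ i, i + 1 < m → (g i).src = (g (i + 1)).rg) :
    ∃ y : PathSpace k N A, ∀ i, i < m → y.1 i = g i := by
  let F : ∀ n, Edge k N A n := fun n => Nat.rec (g 0)
    (fun n fn => if _ : n + 1 < m then g (n + 1) else extEdge hrow (n + 1) fn.src) n
  have hFlt : ∀ n, n < m → F n = g n := by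
    intro n hn
    cases n with
    | zero => rfl
    | succ j =>
        show (if _ : j + 1 < m then g (j + 1) else _) = g (j + 1)
        rw [dif_pos hn]
  have hcomp : ∀ n, (F n).src = (F (n + 1)).rg := by
    intro n
    show (F n).src = (if _ : n + 1 < m then g (n + 1) else extEdge hrow (n + 1) (F n).src).rg
    split
    · next h => rw [hFlt n (by omega)]; exact hg n h
    · rfl
  exact ⟨⟨F, hcomp⟩, hFlt⟩

lemma exists_apply_ne {p q : PathSpace k N A} (h : p ≠ q) : ∃ n, p.1 n ≠ q.1 n := by
  by_contra hc
  push_neg at hc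
  exact h (Subtype.ext (funext hc))

lemma firstDiff_spec {p q : PathSpace k N A} (h : p ≠ q) :
    p.1 (firstDiff p q) ≠ q.1 (firstDiff p q) :=
  Nat.sInf_mem (exists_apply_ne h)

lemma apply_eq_of_lt_firstDiff {p q : PathSpace k N A} {i : ℕ} (h : i < firstDiff p q) :
    p.1 i = q.1 i := by
  by_contra hne
  exact Nat.notMem_of_lt_sInf h hne

lemma firstDiff_comm (p q : PathSpace k N A) : firstDiff p q = firstDiff q p := by
  unfold firstDiff
  congr 1
  ext n
  exact ne_comm

lemma le_firstDiff {p q : PathSpace k N A} (hne : p ≠ q) {m : ℕ}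
    (h : ∀ i, i < m → p.1 i = q.1 i) : m ≤ firstDiff p q := by
  by_contra hc
  push_neg at hc
  exact firstDiff_spec hne (h _ hc)

lemma rg_eq_of_agree {p q : PathSpace k N A} {n : ℕ} (h0 : (p.1 0).rg = (q.1 0).rg)
    (h : ∀ i, i < n → p.1 i = q.1 i) : (p.1 n).rg = (q.1 n).rg := by
  cases n with
  | zero => exact h0
  | succ j => rw [← p.2 j, ← q.2 j, h j (by omega)]

lemma src_prefixPath (p : PathSpace k N A) (n : ℕ) :
    (prefixPath p n).src = (p.1 n).rg := rfl

end AuxKB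

section RealAux
set_option linter.unusedVariables false

variable {k N : ℕ} [NeZero k] {A : Fin k → Matrix (Fin N) (Fin N) ℕ}
variable {ρ : Fin k → ℝ} {xv : Fin N → ℝ} {δ : ℝ}

/-- The product appearing in the weight `w_δ`. -/
noncomputable def Pfun (ρ : Fin k → ℝ) (n : ℕ) : ℝ :=
  ∏ i : Fin k, ρ i ^ (if (i : ℕ) < n % k then n / k + 1 else n / k)

lemma wt_def (δ : ℝ) (ρ : Fin k → ℝ) (xv : Fin N → ℝ) (lam : FB k N A) :
    wt δ ρ xv lam = Pfun ρ lam.1 ^ (-(1 / δ)) * xv lam.2.src := rfl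

lemma one_le_pow_aux {a : ℝ} (h : 1 ≤ a) (n : ℕ) : 1 ≤ a ^ n := by
  induction n with
  | zero => simp
  | succ n ih => rw [pow_succ]; nlinarith

lemma Pfun_pos (hρ : ∀ i, 1 < ρ i) (n : ℕ) : 0 < Pfun ρ n :=
  Finset.prod_pos fun i _ => pow_pos (lt_trans one_pos (hρ i)) _

lemma one_le_Pfun (hρ : ∀ i, 1 < ρ i) (n : ℕ) : 1 ≤ Pfun ρ n := by
  unfold Pfun
  calc (1:ℝ) = ∏ _i : Fin k, 1 := by simp
    _ ≤ _ := Finset.prod_le_prod (fun i _ => zero_le_one)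
        (fun i _ => one_le_pow_aux (hρ i).le _)

lemma Pfun_succ (n : ℕ) : Pfun ρ (n + 1) = Pfun ρ n * ρ ((n : Fin k)) := by
  have hk : 0 < k := Nat.pos_of_ne_zero (NeZero.ne k)
  have hr : n % k < k := Nat.mod_lt _ hk
  have key : ∀ i : Fin k,
      ρ i ^ (if (i : ℕ) < (n + 1) % k then (n + 1) / k + 1 else (n + 1) / k)
        = ρ i ^ (if (i : ℕ) < n % k then n / k + 1 else n / k)
          * (if i = (n : Fin k) then ρ i else 1) := by
    intro i
    have hival : (i = (n : Fin k)) ↔ (i : ℕ) = n % k := by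
      rw [Fin.ext_iff, Fin.val_natCast]
    by_cases hc : n % k + 1 < k
    · have h1 : (n + 1) / k = n / k ∧ (n + 1) % k = n % k + 1 := by
        rw [Nat.div_mod_unique hk]
        have h5 := Nat.mod_add_div n k
        exact ⟨by omega, hc⟩
      rcases h1 with ⟨hdiv, hmod⟩
      rw [hdiv, hmod]
      by_cases h2 : (i : ℕ) < n % k
      · rw [if_pos (by omega), if_pos h2, if_neg (by rw [hival]; omega), mul_one]
      · by_cases h3 : (i : ℕ) = n % k
        · rw [if_pos (by omega), if_neg (by omega), if_pos (hival.mpr h3), pow_succ]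
        · rw [if_neg (by omega), if_neg h2, if_neg (by rw [hival]; omega), mul_one]
    · have hke : n % k + 1 = k := by omega
      have h1 : (n + 1) / k = n / k + 1 ∧ (n + 1) % k = 0 := by
        rw [Nat.div_mod_unique hk]
        have h5 := Nat.mod_add_div n k
        have h4 : k * (n / k + 1) = k * (n / k) + k := by ring
        exact ⟨by omega, hk⟩
      rcases h1 with ⟨hdiv, hmod⟩
      rw [hdiv, hmod]
      have hiv : (i : ℕ) < k := i.2
      by_cases h2 : (i : ℕ) < n % k
      · rw [if_neg (by omega), if_pos h2, if_neg (by rw [hival]; omega), mul_one]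
      · have h3 : (i : ℕ) = n % k := by omega
        rw [if_neg (by omega), if_neg h2, if_pos (hival.mpr h3), pow_succ]
  calc Pfun ρ (n + 1)
      = ∏ i, (ρ i ^ (if (i : ℕ) < n % k then n / k + 1 else n / k)
          * (if i = (n : Fin k) then ρ i else 1)) :=
        Finset.prod_congr rfl fun i _ => key i
    _ = Pfun ρ n * ∏ i, (if i = (n : Fin k) then ρ i else 1) := Finset.prod_mul_distrib
    _ = Pfun ρ n * ρ ((n : Fin k)) := by
        congr 1
        simp [Finset.prod_ite_eq']

lemma wt_pos (hρ : ∀ i, 1 < ρ i) (hxpos : ∀ v, 0 < xv v) (lam : FB k N A) :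
    0 < wt δ ρ xv lam :=
  mul_pos (Real.rpow_pos_of_pos (Pfun_pos hρ _) _) (hxpos _)

lemma xv_le_one (hxpos : ∀ v, 0 < xv v) (hxsum : ∑ v, xv v = 1) (v : Fin N) : xv v ≤ 1 := by
  rw [← hxsum]
  exact Finset.single_le_sum (fun i _ => (hxpos i).le) (Finset.mem_univ v)

lemma wt_le_one (hρ : ∀ i, 1 < ρ i) (hδ1 : 0 < δ) (hxpos : ∀ v, 0 < xv v)
    (hxsum : ∑ v, xv v = 1) (lam : FB k N A) : wt δ ρ xv lam ≤ 1 := by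
  rw [wt_def]
  have h1 : Pfun ρ lam.1 ^ (-(1 / δ)) ≤ 1 :=
    Real.rpow_le_one_of_one_le_of_nonpos (one_le_Pfun hρ _)
      (neg_nonpos.mpr (div_nonneg zero_le_one hδ1.le))
  have h2 : (0:ℝ) ≤ xv lam.2.src := (hxpos _).le
  nlinarith [xv_le_one hxpos hxsum lam.2.src, Real.rpow_pos_of_pos (Pfun_pos hρ lam.1) (-(1/δ))]

lemma eigen_row (hxeig : ∀ i, ((A i).map (Nat.cast : ℕ → ℝ)).mulVec xv = ρ i • xv)
    (i0 : Fin k) (v : Fin N) :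
    ∑ b, ((A i0 v b : ℝ) * xv b) = ρ i0 * xv v := by
  have h := congrFun (hxeig i0) v
  simpa [Matrix.mulVec, dotProduct, Matrix.map_apply] using h

lemma eigen_step (hxpos : ∀ v, 0 < xv v)
    (hxeig : ∀ i, ((A i).map (Nat.cast : ℕ → ℝ)).mulVec xv = ρ i • xv)
    (p : PathSpace k N A) (n : ℕ) :
    xv ((p.1 n).src) ≤ ρ ((n : Fin k)) * xv ((p.1 n).rg) := by
  have hA : 0 < A ((n : Fin k)) ((p.1 n).rg) ((p.1 n).src) := (p.1 n).idx.pos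
  have hterm : xv ((p.1 n).src) ≤ (A ((n : Fin k)) ((p.1 n).rg) ((p.1 n).src) : ℝ)
      * xv ((p.1 n).src) := by
    nth_rewrite 1 [← one_mul (xv ((p.1 n).src))]
    apply mul_le_mul_of_nonneg_right _ (hxpos _).le
    exact_mod_cast hA
  calc xv ((p.1 n).src) ≤ _ := hterm
    _ ≤ ∑ b, ((A ((n : Fin k)) ((p.1 n).rg) b : ℝ) * xv b) :=
        Finset.single_le_sum (f := fun b => (A ((n : Fin k)) ((p.1 n).rg) b : ℝ) * xv b)
          (fun b _ => mul_nonneg (Nat.cast_nonneg _) (hxpos b).le) (Finset.mem_univ _)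
    _ = ρ ((n : Fin k)) * xv ((p.1 n).rg) := eigen_row hxeig _ _

lemma wt_prefix_succ_le (hρ : ∀ i, 1 < ρ i) (hxpos : ∀ v, 0 < xv v)
    (hxeig : ∀ i, ((A i).map (Nat.cast : ℕ → ℝ)).mulVec xv = ρ i • xv)
    (p : PathSpace k N A) (n : ℕ) :
    wt δ ρ xv ⟨n + 1, prefixPath p (n + 1)⟩
      ≤ ρ ((n : Fin k)) ^ ((1 : ℝ) - 1 / δ) * wt δ ρ xv ⟨n, prefixPath p n⟩ := by
  have hρ0 : (0 : ℝ) < ρ ((n : Fin k)) := lt_trans one_pos (hρ _)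
  rw [wt_def, wt_def, src_prefixPath, src_prefixPath, Pfun_succ,
    Real.mul_rpow (Pfun_pos hρ n).le hρ0.le]
  have hx : xv ((p.1 (n + 1)).rg) ≤ ρ ((n : Fin k)) * xv ((p.1 n).rg) := by
    rw [← p.2 n]; exact eigen_step hxpos hxeig p n
  have hnn : (0:ℝ) ≤ Pfun ρ n ^ (-(1 / δ)) * ρ ((n : Fin k)) ^ (-(1 / δ)) :=
    mul_nonneg (Real.rpow_nonneg (Pfun_pos hρ n).le _) (Real.rpow_nonneg hρ0.le _)
  have h1 : Pfun ρ n ^ (-(1 / δ)) * ρ ((n : Fin k)) ^ (-(1 / δ)) * xv ((p.1 (n + 1)).rg)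
      ≤ Pfun ρ n ^ (-(1 / δ)) * ρ ((n : Fin k)) ^ (-(1 / δ))
        * (ρ ((n : Fin k)) * xv ((p.1 n).rg)) :=
    mul_le_mul_of_nonneg_left hx hnn
  refine h1.trans (le_of_eq ?_)
  have h2 : ρ ((n : Fin k)) ^ ((1 : ℝ) - 1 / δ)
      = ρ ((n : Fin k)) ^ (-(1 / δ)) * ρ ((n : Fin k)) := by
    rw [show (1 : ℝ) - 1 / δ = -(1 / δ) + 1 by ring, Real.rpow_add hρ0, Real.rpow_one]
  rw [h2]; ring

lemma one_lt_inv_delta (hδ1 : 0 < δ) (hδ2 : δ < 1) : 1 < 1 / δ := by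
  rw [lt_div_iff₀ hδ1]; linarith

lemma factor_le_one (hρ : ∀ i, 1 < ρ i) (hδ1 : 0 < δ) (hδ2 : δ < 1) (i : Fin k) :
    ρ i ^ ((1 : ℝ) - 1 / δ) ≤ 1 :=
  Real.rpow_le_one_of_one_le_of_nonpos (hρ i).le
    (by have := one_lt_inv_delta hδ1 hδ2; linarith)

lemma wt_prefix_antitone (hρ : ∀ i, 1 < ρ i) (hδ1 : 0 < δ) (hδ2 : δ < 1)
    (hxpos : ∀ v, 0 < xv v)
    (hxeig : ∀ i, ((A i).map (Nat.cast : ℕ → ℝ)).mulVec xv = ρ i • xv)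
    (p : PathSpace k N A) {m n : ℕ} (h : m ≤ n) :
    wt δ ρ xv ⟨n, prefixPath p n⟩ ≤ wt δ ρ xv ⟨m, prefixPath p m⟩ := by
  induction n, h using Nat.le_induction with
  | base => exact le_rfl
  | succ n hmn ih =>
      calc wt δ ρ xv ⟨n + 1, prefixPath p (n + 1)⟩
          ≤ ρ ((n : Fin k)) ^ ((1 : ℝ) - 1 / δ) * wt δ ρ xv ⟨n, prefixPath p n⟩ :=
            wt_prefix_succ_le hρ hxpos hxeig p n
        _ ≤ 1 * wt δ ρ xv ⟨n, prefixPath p n⟩ :=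
            mul_le_mul_of_nonneg_right (factor_le_one hρ hδ1 hδ2 n)
              (wt_pos hρ hxpos _).le
        _ = wt δ ρ xv ⟨n, prefixPath p n⟩ := one_mul _
        _ ≤ _ := ih

lemma rpow_base_antitone {a b e : ℝ} (ha : 0 < a) (hab : a ≤ b) (he : e ≤ 0) :
    b ^ e ≤ a ^ e := by
  have hb : 0 < b := lt_of_lt_of_le ha hab
  have h1 : a ^ (-e) ≤ b ^ (-e) := Real.rpow_le_rpow ha.le hab (by linarith)
  have h2 : (b ^ (-e))⁻¹ ≤ (a ^ (-e))⁻¹ := by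
    apply inv_anti₀ (Real.rpow_pos_of_pos ha _) h1
  rw [show e = -(-e) by ring, Real.rpow_neg ha.le, Real.rpow_neg hb.le]
  exact h2
end RealAux

section RealAux2
set_option linter.unusedVariables false
variable {k N : ℕ} [NeZero k] {A : Fin k → Matrix (Fin N) (Fin N) ℕ}
variable {ρ : Fin k → ℝ} {xv : Fin N → ℝ} {δ : ℝ}

lemma univ_nonempty_fin : (Finset.univ : Finset (Fin k)).Nonempty :=
  ⟨⟨0, Nat.pos_of_ne_zero (NeZero.ne k)⟩, Finset.mem_univ _⟩

/-- Eventual smallness of the weights along the prefixes of a fixed path. -/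
lemma wt_prefix_lt (hρ : ∀ i, 1 < ρ i) (hδ1 : 0 < δ) (hδ2 : δ < 1)
    (hxpos : ∀ v, 0 < xv v)
    (hxeig : ∀ i, ((A i).map (Nat.cast : ℕ → ℝ)).mulVec xv = ρ i • xv)
    (p : PathSpace k N A) {r : ℝ} (hr : 0 < r) :
    ∃ n, ∀ m, n ≤ m → wt δ ρ xv ⟨m, prefixPath p m⟩ < r := by
  have hne : (Finset.univ : Finset (Fin k)).Nonempty := univ_nonempty_fin
  set ρm := Finset.univ.inf' hne ρ with hρm_def
  have hρm : 1 < ρm := (Finset.lt_inf'_iff hne).mpr fun i _ => hρ i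
  set c := ρm ^ ((1 : ℝ) - 1 / δ) with hc_def
  have hc0 : 0 < c := Real.rpow_pos_of_pos (by linarith) _
  have hc1 : c < 1 := Real.rpow_lt_one_of_one_lt_of_neg hρm
    (by have := one_lt_inv_delta hδ1 hδ2; linarith)
  have hbound : ∀ n, wt δ ρ xv ⟨n, prefixPath p n⟩
      ≤ c ^ n * wt δ ρ xv ⟨0, prefixPath p 0⟩ := by
    intro n
    induction n with
    | zero => simp
    | succ n ih =>
        have hstep := wt_prefix_succ_le (δ := δ) hρ hxpos hxeig p n
        have hfac : ρ ((n : Fin k)) ^ ((1 : ℝ) - 1 / δ) ≤ c :=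
          rpow_base_antitone (by linarith) (Finset.inf'_le _ (Finset.mem_univ _))
            (by have := one_lt_inv_delta hδ1 hδ2; linarith)
        calc wt δ ρ xv ⟨n + 1, prefixPath p (n + 1)⟩
            ≤ ρ ((n : Fin k)) ^ ((1 : ℝ) - 1 / δ) * wt δ ρ xv ⟨n, prefixPath p n⟩ := hstep
          _ ≤ c * wt δ ρ xv ⟨n, prefixPath p n⟩ :=
              mul_le_mul_of_nonneg_right hfac (wt_pos hρ hxpos _).le
          _ ≤ c * (c ^ n * wt δ ρ xv ⟨0, prefixPath p 0⟩) :=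
              mul_le_mul_of_nonneg_left ih hc0.le
          _ = c ^ (n + 1) * wt δ ρ xv ⟨0, prefixPath p 0⟩ := by ring
  have hw0 : 0 < wt δ ρ xv ⟨0, prefixPath p 0⟩ := wt_pos hρ hxpos _
  obtain ⟨n, hn⟩ := exists_pow_lt_of_lt_one (div_pos hr hw0) hc1
  refine ⟨n, fun m hm => ?_⟩
  have h1 : wt δ ρ xv ⟨m, prefixPath p m⟩ ≤ wt δ ρ xv ⟨n, prefixPath p n⟩ :=
    wt_prefix_antitone hρ hδ1 hδ2 hxpos hxeig p hm
  have h2 : c ^ n * wt δ ρ xv ⟨0, prefixPath p 0⟩ < r := by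
    rw [div_eq_mul_inv] at hn
    calc c ^ n * wt δ ρ xv ⟨0, prefixPath p 0⟩
        < r * (wt δ ρ xv ⟨0, prefixPath p 0⟩)⁻¹ * wt δ ρ xv ⟨0, prefixPath p 0⟩ :=
          mul_lt_mul_of_pos_right hn hw0
      _ = r := by field_simp
  linarith [hbound n]

/-! ### Properties of the metric `d_{w_δ}`. -/

lemma distW_self (w : FB k N A → ℝ) (p : PathSpace k N A) : distW w p p = 0 := if_pos rfl

lemma distW_eq_one {w : FB k N A → ℝ} {p q : PathSpace k N A} (hne : p ≠ q)
    (hrg : (p.1 0).rg ≠ (q.1 0).rg) : distW w p q = 1 := by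
  unfold distW
  rw [if_neg hne, if_neg hrg]

lemma distW_eq_wt {w : FB k N A → ℝ} {p q : PathSpace k N A} (hne : p ≠ q)
    (hrg : (p.1 0).rg = (q.1 0).rg) :
    distW w p q = w ⟨firstDiff p q, prefixPath p (firstDiff p q)⟩ := by
  unfold distW
  rw [if_neg hne, if_pos hrg]

lemma distW_pos (hρ : ∀ i, 1 < ρ i) (hxpos : ∀ v, 0 < xv v)
    {p q : PathSpace k N A} (hne : p ≠ q) : 0 < distW (wt δ ρ xv) p q := by
  unfold distW
  rw [if_neg hne]
  split
  · exact wt_pos hρ hxpos _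
  · exact one_pos

lemma distW_nonneg (hρ : ∀ i, 1 < ρ i) (hxpos : ∀ v, 0 < xv v)
    (p q : PathSpace k N A) : 0 ≤ distW (wt δ ρ xv) p q := by
  rcases eq_or_ne p q with rfl | hne
  · rw [distW_self]
  · exact (distW_pos hρ hxpos hne).le

lemma distW_le_one' (hρ : ∀ i, 1 < ρ i) (hδ1 : 0 < δ) (hxpos : ∀ v, 0 < xv v)
    (hxsum : ∑ v, xv v = 1) (p q : PathSpace k N A) : distW (wt δ ρ xv) p q ≤ 1 := by
  unfold distW
  split
  · exact zero_le_one
  split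
  · exact wt_le_one hρ hδ1 hxpos hxsum _
  · exact le_rfl

lemma wt_prefix_congr {p q : PathSpace k N A} {n : ℕ} (h : (p.1 n).rg = (q.1 n).rg) :
    wt δ ρ xv ⟨n, prefixPath p n⟩ = wt δ ρ xv ⟨n, prefixPath q n⟩ := by
  rw [wt_def, wt_def, src_prefixPath, src_prefixPath, h]

lemma distW_comm' (p q : PathSpace k N A) :
    distW (wt δ ρ xv) p q = distW (wt δ ρ xv) q p := by
  rcases eq_or_ne p q with rfl | hne
  · rfl
  unfold distW
  rw [if_neg hne, if_neg (Ne.symm hne)]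
  by_cases hrg : (p.1 0).rg = (q.1 0).rg
  · rw [if_pos hrg, if_pos hrg.symm, firstDiff_comm q p]
    exact wt_prefix_congr
      (rg_eq_of_agree hrg fun i hi => apply_eq_of_lt_firstDiff hi)
  · rw [if_neg hrg, if_neg fun h => hrg h.symm]

lemma distW_ultra (hρ : ∀ i, 1 < ρ i) (hδ1 : 0 < δ) (hδ2 : δ < 1)
    (hxpos : ∀ v, 0 < xv v) (hxsum : ∑ v, xv v = 1)
    (hxeig : ∀ i, ((A i).map (Nat.cast : ℕ → ℝ)).mulVec xv = ρ i • xv)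
    (p q r : PathSpace k N A) :
    distW (wt δ ρ xv) p q ≤ max (distW (wt δ ρ xv) p r) (distW (wt δ ρ xv) r q) := by
  rcases eq_or_ne p q with rfl | hpq
  · rw [distW_self]
    exact le_max_of_le_left (distW_nonneg hρ hxpos _ _)
  rcases eq_or_ne r p with rfl | hrp
  · exact le_max_of_le_right le_rfl
  rcases eq_or_ne r q with rfl | hrq
  · exact le_max_of_le_left le_rfl
  by_cases hpq0 : (p.1 0).rg = (q.1 0).rg
  · by_cases hpr0 : (p.1 0).rg = (r.1 0).rg
    · have hrq0 : (r.1 0).rg = (q.1 0).rg := hpr0.symm.trans hpq0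
      rw [distW_eq_wt hpq hpq0, distW_eq_wt (Ne.symm hrp) hpr0, distW_eq_wt hrq hrq0]
      have hmin : min (firstDiff p r) (firstDiff r q) ≤ firstDiff p q :=
        le_firstDiff hpq fun i hi =>
          (apply_eq_of_lt_firstDiff (lt_of_lt_of_le hi (min_le_left _ _))).trans
            (apply_eq_of_lt_firstDiff (lt_of_lt_of_le hi (min_le_right _ _)))
      rcases le_total (firstDiff p r) (firstDiff r q) with hab | hba
      · have han : firstDiff p r ≤ firstDiff p q := by
          rw [min_eq_left hab] at hmin; exact hmin
        exact le_max_of_le_left (wt_prefix_antitone hρ hδ1 hδ2 hxpos hxeig p han)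
      · have hbn : firstDiff r q ≤ firstDiff p q := by
          rw [min_eq_right hba] at hmin; exact hmin
        refine le_max_of_le_right ?_
        have h1 : wt δ ρ xv ⟨firstDiff p q, prefixPath p (firstDiff p q)⟩
            ≤ wt δ ρ xv ⟨firstDiff r q, prefixPath p (firstDiff r q)⟩ :=
          wt_prefix_antitone hρ hδ1 hδ2 hxpos hxeig p hbn
        have h2 : wt δ ρ xv ⟨firstDiff r q, prefixPath p (firstDiff r q)⟩
            = wt δ ρ xv ⟨firstDiff r q, prefixPath r (firstDiff r q)⟩ :=
          wt_prefix_congr (rg_eq_of_agree hpr0 fun i hi =>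
            apply_eq_of_lt_firstDiff (lt_of_lt_of_le hi hba))
        rw [← h2]; exact h1
    · refine le_max_of_le_left ?_
      rw [distW_eq_one (Ne.symm hrp) hpr0]
      exact distW_le_one' hρ hδ1 hxpos hxsum p q
  · by_cases hpr0 : (p.1 0).rg = (r.1 0).rg
    · have hrq0 : (r.1 0).rg ≠ (q.1 0).rg := fun h => hpq0 (hpr0.trans h)
      refine le_max_of_le_right ?_
      rw [distW_eq_one hrq hrq0]
      exact distW_le_one' hρ hδ1 hxpos hxsum p q
    · refine le_max_of_le_left ?_
      rw [distW_eq_one (Ne.symm hrp) hpr0]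
      exact distW_le_one' hρ hδ1 hxpos hxsum p q
end RealAux2

section TopAux
set_option linter.unusedVariables false
variable {k N : ℕ} [NeZero k] {A : Fin k → Matrix (Fin N) (Fin N) ℕ}
variable {ρ : Fin k → ℝ} {xv : Fin N → ℝ} {δ : ℝ}

/-- Every open ball of `d_{w_δ}` is open in the cylinder topology. -/
lemma isOpen_ball (hρ : ∀ i, 1 < ρ i) (hδ1 : 0 < δ) (hδ2 : δ < 1)
    (hxpos : ∀ v, 0 < xv v) (hxsum : ∑ v, xv v = 1)
    (hxeig : ∀ i, ((A i).map (Nat.cast : ℕ → ℝ)).mulVec xv = ρ i • xv)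
    (p : PathSpace k N A) {r : ℝ} (hr : 0 < r) :
    IsOpen {q : PathSpace k N A | distW (wt δ ρ xv) p q < r} := by
  apply isOpen_of_forall_prefix
  intro q hq
  have hq' : distW (wt δ ρ xv) p q < r := hq
  rcases eq_or_ne q p with rfl | hne
  · obtain ⟨n, hn⟩ := wt_prefix_lt hρ hδ1 hδ2 hxpos hxeig q hr
    refine ⟨n, fun z hz => ?_⟩
    rw [mem_cyl_prefix_iff] at hz
    rcases eq_or_ne q z with rfl | hqz
    · show distW (wt δ ρ xv) q q < r
      rw [distW_self]; exact hr
    · show distW (wt δ ρ xv) q z < r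
      rw [distW_eq_wt hqz hz.1.symm]
      exact lt_of_le_of_lt
        (le_of_eq rfl)
        (by
          have hfd : n ≤ firstDiff q z :=
            le_firstDiff hqz fun i hi => (hz.2 i hi).symm
          exact hn _ hfd)
  · by_cases hrg : (p.1 0).rg = (q.1 0).rg
    · refine ⟨firstDiff p q + 1, fun z hz => ?_⟩
      rw [mem_cyl_prefix_iff] at hz
      have hpq : p ≠ q := Ne.symm hne
      have hz0 : (z.1 0).rg = (p.1 0).rg := hz.1.trans hrg.symm
      have hzedges : ∀ i, i < firstDiff p q → p.1 i = z.1 i := fun i hi =>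
        (apply_eq_of_lt_firstDiff hi).trans (hz.2 i (by omega)).symm
      have hzn : z.1 (firstDiff p q) ≠ p.1 (firstDiff p q) := by
        rw [hz.2 (firstDiff p q) (by omega)]
        exact fun h => firstDiff_spec hpq h.symm
      have hpz : p ≠ z := fun h => hzn (by rw [h])
      show distW (wt δ ρ xv) p z < r
      rw [distW_eq_wt hpz hz0.symm]
      have hfdz : firstDiff p z = firstDiff p q :=
        le_antisymm (Nat.sInf_le (Ne.symm hzn)) (le_firstDiff hpz hzedges)
      rw [hfdz]
      rwa [distW_eq_wt hpq hrg] at hq'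
    · have h1r : (1 : ℝ) < r := by
        rwa [distW_eq_one (Ne.symm hne) fun h => hrg h] at hq'
      refine ⟨0, fun z hz => ?_⟩
      rw [mem_cyl_prefix_iff] at hz
      have hzp : (p.1 0).rg ≠ (z.1 0).rg := fun h => hrg (h.trans hz.1)
      have hpz : p ≠ z := fun h => hzp (by rw [h])
      show distW (wt δ ρ xv) p z < r
      rw [distW_eq_one hpz hzp]
      exact h1r

/-- Balls are contained in the corresponding cylinder. -/
lemma ball_subset_cyl (hρ : ∀ i, 1 < ρ i) (hδ1 : 0 < δ) (hδ2 : δ < 1)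
    (hxpos : ∀ v, 0 < xv v) (hxsum : ∑ v, xv v = 1)
    (hxeig : ∀ i, ((A i).map (Nat.cast : ℕ → ℝ)).mulVec xv = ρ i • xv)
    {ℓ : ℕ} {lam : FinPath k N A ℓ} {q : PathSpace k N A} (hq : q ∈ Cyl lam)
    {z : PathSpace k N A}
    (hz : distW (wt δ ρ xv) q z < wt δ ρ xv ⟨ℓ, prefixPath q ℓ⟩) : z ∈ Cyl lam := by
  rcases eq_or_ne q z with rfl | hne
  · exact hq
  by_cases hrg : (q.1 0).rg = (z.1 0).rg
  · rw [distW_eq_wt hne hrg] at hz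
    have hfd : ℓ ≤ firstDiff q z := by
      by_contra hc
      push_neg at hc
      exact absurd hz (not_lt.mpr (wt_prefix_antitone hρ hδ1 hδ2 hxpos hxeig q hc.le))
    apply cyl_prefix_subset_of_mem hq (le_refl ℓ)
    rw [mem_cyl_prefix_iff]
    exact ⟨hrg.symm.trans rfl ▸ hrg.symm,
      fun i hi => (apply_eq_of_lt_firstDiff (lt_of_lt_of_le hi hfd)).symm⟩
  · rw [distW_eq_one hne hrg] at hz
    exact absurd hz (not_lt.mpr (wt_le_one hρ hδ1 hxpos hxsum _))

/-- Every cylinder is open in the topology generated by the balls of `d_{w_δ}`. -/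
lemma generateOpen_ball_cyl (hρ : ∀ i, 1 < ρ i) (hδ1 : 0 < δ) (hδ2 : δ < 1)
    (hxpos : ∀ v, 0 < xv v) (hxsum : ∑ v, xv v = 1)
    (hxeig : ∀ i, ((A i).map (Nat.cast : ℕ → ℝ)).mulVec xv = ρ i • xv)
    {ℓ : ℕ} (lam : FinPath k N A ℓ) :
    TopologicalSpace.GenerateOpen { S : Set (PathSpace k N A) |
      ∃ (p : PathSpace k N A) (r : ℝ), 0 < r ∧ S = { q | distW (wt δ ρ xv) p q < r } }
      (Cyl lam) := by
  have hrep : Cyl lam = ⋃₀ ((fun q : ↥(Cyl lam) =>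
      {z | distW (wt δ ρ xv) q.1 z < wt δ ρ xv ⟨ℓ, prefixPath q.1 ℓ⟩}) '' Set.univ) := by
    ext z
    rw [Set.sUnion_image]
    simp only [Set.mem_iUnion]
    constructor
    · intro hz
      refine ⟨⟨z, hz⟩, Set.mem_univ _, ?_⟩
      show distW (wt δ ρ xv) z z < _
      rw [distW_self]
      exact wt_pos hρ hxpos _
    · rintro ⟨q, -, hzq⟩
      exact ball_subset_cyl hρ hδ1 hδ2 hxpos hxsum hxeig q.2 hzq
  rw [hrep]
  apply TopologicalSpace.GenerateOpen.sUnion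
  rintro S ⟨q, -, rfl⟩
  exact TopologicalSpace.GenerateOpen.basic _
    ⟨q.1, wt δ ρ xv ⟨ℓ, prefixPath q.1 ℓ⟩, wt_pos hρ hxpos _, rfl⟩

/-! ### Compactness. -/

instance edgeTop (n : ℕ) : TopologicalSpace (Edge k N A n) := ⊥
instance edgeDisc (n : ℕ) : DiscreteTopology (Edge k N A n) := ⟨rfl⟩

lemma compactSpace_pathSpace : CompactSpace (PathSpace k N A) := by
  let Y : Set ((n : ℕ) → Edge k N A n) := {f | ∀ n, (f n).src = (f (n + 1)).rg}
  have hYclosed : IsClosed Y := by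
    have hrep : Y = ⋂ n, {f : (j : ℕ) → Edge k N A j | (f n).src = (f (n + 1)).rg} := by
      ext f
      simp [Y, Set.mem_iInter]
    rw [hrep]
    refine isClosed_iInter fun n => ?_
    have hcont : Continuous fun f : (j : ℕ) → Edge k N A j => (f n, f (n + 1)) :=
      (continuous_apply n).prodMk (continuous_apply (n + 1))
    exact IsClosed.preimage hcont
      (isClosed_discrete {e : Edge k N A n × Edge k N A (n + 1) | e.1.src = e.2.rg})
  have hYcomp : IsCompact Y := hYclosed.isCompact
  let φ : Y → PathSpace k N A := fun f => ⟨f.1, f.2⟩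
  have hφcont : Continuous φ := by
    apply continuous_generateFrom_iff.mpr
    rintro S ⟨ℓ, lam, rfl⟩
    have hpre : φ ⁻¹' Cyl lam = Subtype.val ⁻¹'
        (((fun g : (n : ℕ) → Edge k N A n => g 0) ⁻¹' {e | e.rg = lam.rg})
          ∩ ⋂ i : Fin ℓ,
            (fun g : (n : ℕ) → Edge k N A n => g (i : ℕ)) ⁻¹' {lam.edge i}) := by
      ext f
      simp [φ, Cyl, Set.mem_iInter]
      exact Iff.rfl
    rw [hpre]
    apply Continuous.isOpen_preimage continuous_subtype_val
    apply IsOpen.inter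
    · exact IsOpen.preimage (continuous_apply 0) (isOpen_discrete _)
    · exact isOpen_iInter_of_finite fun i =>
        IsOpen.preimage (continuous_apply (i : ℕ)) (isOpen_discrete _)
  have hsurj : Function.Surjective φ := fun z => ⟨⟨z.1, z.2⟩, rfl⟩
  constructor
  have himg : (Set.univ : Set (PathSpace k N A)) = φ '' Set.univ := by
    rw [Set.image_univ]
    exact (Set.range_eq_univ.mpr hsurj).symm
  rw [himg]
  exact (isCompact_iff_isCompact_univ.mp hYcomp).image hφcont
end TopAux

section PerfAux
set_option linter.unusedVariables false
variable {k N : ℕ} [NeZero k] {A : Fin k → Matrix (Fin N) (Fin N) ℕ}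
variable {ρ : Fin k → ℝ} {xv : Fin N → ℝ} {δ : ℝ}

/-- Along every infinite path there are levels with at least two outgoing edges. -/
lemma exists_big_row (hρ : ∀ i, 1 < ρ i) (hxpos : ∀ v, 0 < xv v)
    (hxsum : ∑ v, xv v = 1)
    (hxeig : ∀ i, ((A i).map (Nat.cast : ℕ → ℝ)).mulVec xv = ρ i • xv)
    (p : PathSpace k N A) (n : ℕ) :
    ∃ m, n ≤ m ∧ 2 ≤ ∑ b, A ((m : Fin k)) ((p.1 m).rg) b := by
  by_contra hc
  push_neg at hc
  have hne : (Finset.univ : Finset (Fin k)).Nonempty := univ_nonempty_fin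
  set ρm := Finset.univ.inf' hne ρ with hρm_def
  have hρm : 1 < ρm := (Finset.lt_inf'_iff hne).mpr fun i _ => hρ i
  have hstep : ∀ m, n ≤ m → xv ((p.1 (m + 1)).rg) = ρ ((m : Fin k)) * xv ((p.1 m).rg) := by
    intro m hm
    have hsum := hc m hm
    have h1 : 0 < A ((m : Fin k)) ((p.1 m).rg) ((p.1 m).src) := (p.1 m).idx.pos
    have hle : A ((m : Fin k)) ((p.1 m).rg) ((p.1 m).src)
        ≤ ∑ b, A ((m : Fin k)) ((p.1 m).rg) b :=
      Finset.single_le_sum (f := fun b => A ((m : Fin k)) ((p.1 m).rg) b)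
        (fun _ _ => Nat.zero_le _) (Finset.mem_univ _)
    have hA1 : A ((m : Fin k)) ((p.1 m).rg) ((p.1 m).src) = 1 := by omega
    have hA0 : ∀ b, b ≠ (p.1 m).src → A ((m : Fin k)) ((p.1 m).rg) b = 0 := by
      intro b hb
      have h2 : A ((m : Fin k)) ((p.1 m).rg) b + A ((m : Fin k)) ((p.1 m).rg) ((p.1 m).src)
          ≤ ∑ c, A ((m : Fin k)) ((p.1 m).rg) c := by
        calc A ((m : Fin k)) ((p.1 m).rg) b + A ((m : Fin k)) ((p.1 m).rg) ((p.1 m).src)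
            = ∑ c ∈ ({b, (p.1 m).src} : Finset (Fin N)), A ((m : Fin k)) ((p.1 m).rg) c :=
              (Finset.sum_pair hb).symm
          _ ≤ _ := Finset.sum_le_sum_of_subset (Finset.subset_univ _)
      omega
    have heq := eigen_row hxeig ((m : Fin k)) ((p.1 m).rg)
    have hsum2 : ∑ b, ((A ((m : Fin k)) ((p.1 m).rg) b : ℝ) * xv b) = xv ((p.1 m).src) := by
      rw [Finset.sum_eq_single ((p.1 m).src)]
      · rw [hA1]; simp
      · intro b _ hb
        rw [hA0 b hb]; simp
      · intro h
        exact absurd (Finset.mem_univ _) h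
    rw [← p.2 m, ← hsum2, heq]
  have hgrow : ∀ j, ρm ^ j * xv ((p.1 n).rg) ≤ xv ((p.1 (n + j)).rg) := by
    intro j
    induction j with
    | zero => simp
    | succ j ih =>
        have h2 := hstep (n + j) (by omega)
        have h3 : ρm ≤ ρ (((n + j) : ℕ) : Fin k) := Finset.inf'_le _ (Finset.mem_univ _)
        have hx0 : 0 < xv ((p.1 (n + j)).rg) := hxpos _
        calc ρm ^ (j + 1) * xv ((p.1 n).rg) = ρm * (ρm ^ j * xv ((p.1 n).rg)) := by ring
          _ ≤ ρm * xv ((p.1 (n + j)).rg) := by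
              apply mul_le_mul_of_nonneg_left ih (by linarith)
          _ ≤ ρ (((n + j) : ℕ) : Fin k) * xv ((p.1 (n + j)).rg) :=
              mul_le_mul_of_nonneg_right h3 hx0.le
          _ = xv ((p.1 (n + j + 1)).rg) := h2.symm
  obtain ⟨j, hj⟩ := pow_unbounded_of_one_lt (1 / xv ((p.1 n).rg)) hρm
  have h0 := hxpos ((p.1 n).rg)
  rw [div_lt_iff₀ h0] at hj
  have hgt : 1 < xv ((p.1 (n + j)).rg) := lt_of_lt_of_le hj (hgrow j)
  exact absurd hgt (not_lt.mpr (xv_le_one hxpos hxsum _))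

/-- If the row sum at an edge's level is at least 2, there is a different edge with the
same range. -/
lemma exists_other_edge {m : ℕ} (e0 : Edge k N A m)
    (h2 : 2 ≤ ∑ b, A ((m : Fin k)) e0.rg b) :
    ∃ e : Edge k N A m, e.rg = e0.rg ∧ e ≠ e0 := by
  obtain ⟨rg, src, idx⟩ := e0
  simp only at h2 ⊢
  by_cases hb : ∃ b, b ≠ src ∧ 0 < A ((m : Fin k)) rg b
  · obtain ⟨b, hbne, hbpos⟩ := hb
    refine ⟨⟨rg, b, ⟨0, hbpos⟩⟩, rfl, fun h => hbne ?_⟩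
    have := congrArg Edge.src h
    simpa using this
  · push_neg at hb
    have hsum : ∑ b, A ((m : Fin k)) rg b = A ((m : Fin k)) rg src := by
      rw [Finset.sum_eq_single src]
      · intro b _ hbne
        have := hb b hbne
        omega
      · intro h
        exact absurd (Finset.mem_univ _) h
    have hA2 : 2 ≤ A ((m : Fin k)) rg src := by omega
    refine ⟨⟨rg, src, ⟨if (idx : ℕ) = 0 then 1 else 0, by split <;> omega⟩⟩, rfl, ?_⟩
    intro h
    simp only [Edge.mk.injEq, heq_eq_eq, true_and] at h
    have hval : (if (idx : ℕ) = 0 then 1 else 0) = (idx : ℕ) := congrArg Fin.val h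
    split at hval <;> omega

/-- Every cylinder around a point contains a different point: perfectness. -/
lemma exists_ne_mem_cyl (hrow : ∀ (i : Fin k) (a : Fin N), ∃ b, 0 < A i a b)
    (hρ : ∀ i, 1 < ρ i) (hxpos : ∀ v, 0 < xv v) (hxsum : ∑ v, xv v = 1)
    (hxeig : ∀ i, ((A i).map (Nat.cast : ℕ → ℝ)).mulVec xv = ρ i • xv)
    (p : PathSpace k N A) (n : ℕ) :
    ∃ y, y ∈ Cyl (prefixPath p n) ∧ y ≠ p := by
  obtain ⟨m, hnm, h2⟩ := exists_big_row hρ hxpos hxsum hxeig p n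
  obtain ⟨e, herg, hene⟩ := exists_other_edge (p.1 m) h2
  let g : ∀ i, Edge k N A i := fun i =>
    if h : i = m then cast (congrArg (Edge k N A) h.symm) e else p.1 i
  have hgm : g m = e := by
    show (if h : m = m then cast (congrArg (Edge k N A) h.symm) e else p.1 m) = e
    rw [dif_pos rfl]
    exact cast_eq rfl e
  have hglt : ∀ i, i ≠ m → g i = p.1 i := fun i hi => dif_neg hi
  have hg : ∀ i, i + 1 < m + 1 → (g i).src = (g (i + 1)).rg := by
    intro i hi
    rw [hglt i (by omega)]
    by_cases h : i + 1 = m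
    · subst h
      rw [hgm, herg]
      exact p.2 i
    · rw [hglt _ h]
      exact p.2 i
  obtain ⟨y, hy⟩ := buildPath hrow (m + 1) g hg
  have hym : y.1 m = e := by rw [hy m (by omega), hgm]
  refine ⟨y, ?_, ?_⟩
  · rw [mem_cyl_prefix_iff]
    refine ⟨?_, fun i hi => ?_⟩
    · rcases Nat.eq_zero_or_pos m with rfl | hm
      · rw [hy 0 (by omega), hgm]
        exact herg
      · rw [hy 0 (by omega), hglt 0 (by omega)]
    · rw [hy i (by omega), hglt i (by omega)]
  · intro h
    apply hene
    rw [← hym, h]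
end PerfAux

end KBratteli

namespace KBratteli

/-- Under the Perron–Frobenius hypotheses with all spectral radii
`> 1`, the infinite path space of the stationary `k`-Bratteli diagram, with the metric
`d_δ = d_{w_δ}`, is an ultrametric Cantor set: nonempty, compact, perfect and totally
disconnected; `d_δ` is a metric satisfying the strong triangle inequality; and `d_δ`
induces the cylinder-set topology. -/
theorem statement4 (k N : ℕ) [NeZero k] [NeZero N]
    (A : Fin k → Matrix (Fin N) (Fin N) ℕ)
    (hcomm : ∀ i j, A i * A j = A j * A i)
    (hrow : ∀ (i : Fin k) (a : Fin N), ∃ b, 0 < A i a b)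
    (hirr : IrreducibleFamily A)
    (ρ : Fin k → ℝ) (hρ : ∀ i, ρ i = specRad (A i))
    (x : Fin N → ℝ) (hxpos : ∀ v, 0 < x v) (hxsum : ∑ v, x v = 1)
    (hxeig : ∀ i, ((A i).map (Nat.cast : ℕ → ℝ)).mulVec x = ρ i • x)
    (δ : ℝ) (hδ : δ ∈ Set.Ioo (0 : ℝ) 1)
    (hρone : ∀ i, 1 < ρ i) :
    Nonempty (PathSpace k N A) ∧
    CompactSpace (PathSpace k N A) ∧
    TotallyDisconnectedSpace (PathSpace k N A) ∧
    Perfect (Set.univ : Set (PathSpace k N A)) ∧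
    (∀ p q : PathSpace k N A, distW (wt δ ρ x) p q = distW (wt δ ρ x) q p) ∧
    (∀ p q : PathSpace k N A, distW (wt δ ρ x) p q = 0 ↔ p = q) ∧
    (∀ p q r : PathSpace k N A,
        distW (wt δ ρ x) p q ≤ max (distW (wt δ ρ x) p r) (distW (wt δ ρ x) r q)) ∧
    TopologicalSpace.generateFrom { S : Set (PathSpace k N A) |
        ∃ (p : PathSpace k N A) (r : ℝ), 0 < r ∧ S = { q | distW (wt δ ρ x) p q < r } }
      = TopologicalSpace.generateFrom (cylinderSets k N A) := by
  obtain ⟨hδ1, hδ2⟩ := hδ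
  have hρ1 : ∀ i, 1 < ρ i := hρone
  refine ⟨?_, compactSpace_pathSpace, ?_, ?_, fun p q => distW_comm' p q, ?_, ?_, ?_⟩
  · -- nonempty
    obtain ⟨y, -⟩ := buildPath hrow 0
      (fun i => extEdge hrow i ⟨0, Nat.pos_of_ne_zero (NeZero.ne N)⟩)
      (fun i hi => absurd hi (by omega))
    exact ⟨y⟩
  · -- totally disconnected
    constructor
    refine isTotallyDisconnected_of_isTotallySeparated (@TotallySeparatedSpace.isTotallySeparated_univ _ _ (totallySeparatedSpace_iff_exists_isClopen.mpr ?_))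
    intro p q hpq
    obtain ⟨n, hn⟩ := exists_apply_ne hpq
    refine ⟨Cyl (prefixPath p (n + 1)), ⟨isClosed_cyl _, isOpen_cyl _⟩,
      mem_cyl_prefixPath p (n + 1), fun hq => hn ?_⟩
    rw [mem_cyl_prefix_iff] at hq
    exact (hq.2 n (by omega)).symm
  · -- perfect
    refine ⟨isClosed_univ, fun p _ => ?_⟩
    rw [accPt_iff_nhds]
    intro U hU
    obtain ⟨V, hVU, hVopen, hpV⟩ := mem_nhds_iff.mp hU
    obtain ⟨n, hn⟩ := exists_prefix_subset hVopen p hpV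
    obtain ⟨y, hy, hyne⟩ := exists_ne_mem_cyl hrow hρ1 hxpos hxsum hxeig p n
    exact ⟨y, ⟨hVU (hn hy), trivial⟩, hyne⟩
  · -- zero iff eq
    intro p q
    constructor
    · intro h
      by_contra hne
      exact absurd h (ne_of_gt (distW_pos hρ1 hxpos hne))
    · rintro rfl
      exact distW_self _ p
  · -- ultrametric
    exact fun p q r => distW_ultra hρ1 hδ1 hδ2 hxpos hxsum hxeig p q r
  · -- topologies agree
    apply le_antisymm
    · apply le_generateFrom
      rintro S ⟨ℓ, lam, rfl⟩
      exact generateOpen_ball_cyl hρ1 hδ1 hδ2 hxpos hxsum hxeig lam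
    · apply le_generateFrom
      rintro S ⟨p, r, hr, rfl⟩
      exact isOpen_ball hρ1 hδ1 hδ2 hxpos hxsum hxeig p hr


end KBratteli
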